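/- Let q be an odd prime power with q ≡ 2 (mod 3). Then the (2q+2)×(2q+2) block matrix H = [[I_{q+1} − U_qᵀ, U_q + I_{q+1}], [I_{q+1} + U_qᵀ, U_q − I_{q+1}]] is a Hadamard matrix of order 2q+2, the row of H indexed by ∞ in the first block row is the all-one vector, and every row of H, reduced modulo 3, is a codeword of L(q). -/
import Mathlib


open Matrix Finset

/-- The Pless matrix `S_q`, with rows and columns indexed by `GF(q) ∪ {∞}`
(`none` playing the role of `∞`), built from the quadratic character of `GF(q)`. -/
def Smat (F : Type) [Field F] [Fintype F] [DecidableEq F] :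
    Matrix (Option F) (Option F) ℤ := fun i j =>
  match i, j with
  | none, none => 0
  | none, some _ => 1
  | some _, none => quadraticChar F (-1)
  | some a, some b => quadraticChar F (a - b)

/-- The matrix `U_q`, obtained from `S_q` by replacing each entry `s_{a,∞}`
(`a ∈ GF(q)`) in the column labeled `∞` by `-1`. -/
def Umat (F : Type) [Field F] [Fintype F] [DecidableEq F] :
    Matrix (Option F) (Option F) ℤ := fun i j =>
  match i, j with
  | some _, none => -1
  | i, j => Smat F i j

/-- The row of the generator matrix `(I | U_q)` of the code `L(q)`,
reduced modulo 3, indexed by `i : Option F`. -/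
def genRowL (F : Type) [Field F] [Fintype F] [DecidableEq F] (i : Option F) :
    (Option F ⊕ Option F) → ZMod 3 := fun j =>
  match j with
  | Sum.inl k => if i = k then 1 else 0
  | Sum.inr k => ((Umat F i k : ℤ) : ZMod 3)

/-- The code `L(q)`: the ternary code of length `2q+2` spanned by the rows of
`(I | U_q)` reduced modulo 3; it is monomially equivalent to the Pless symmetry code. -/
def Lcode (F : Type) [Field F] [Fintype F] [DecidableEq F] :
    Submodule (ZMod 3) ((Option F ⊕ Option F) → ZMod 3) :=
  Submodule.span (ZMod 3) (Set.range (genRowL F))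

/-- The Hadamard matrix `H = [[I − U_qᵀ, U_q + I], [I + U_qᵀ, U_q − I]]`. -/
def Hmat (F : Type) [Field F] [Fintype F] [DecidableEq F] :
    Matrix (Option F ⊕ Option F) (Option F ⊕ Option F) ℤ :=
  Matrix.fromBlocks (1 - (Umat F)ᵀ) (Umat F + 1) (1 + (Umat F)ᵀ) (Umat F - 1)

section AuxLemmas
variable (F : Type) [Field F] [Fintype F] [DecidableEq F]

lemma sum_chi_mul (hF : ringChar F ≠ 2) {c : F} (hc : c ≠ 0) :
    ∑ x : F, (quadraticChar F x : ℤ) * quadraticChar F (x + c) = -1 := by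
  have h1 : ∑ x : F, (quadraticChar F x : ℤ) * quadraticChar F (x + c)
      = ∑ t : F, (quadraticChar F t : ℤ) * quadraticChar F (t + 1) := by
    refine (Fintype.sum_equiv (Equiv.mulLeft₀ c hc) _ _ fun t => ?_).symm
    show (quadraticChar F t : ℤ) * quadraticChar F (t + 1)
        = (quadraticChar F (c * t) : ℤ) * quadraticChar F (c * t + c)
    have h2 : c * t + c = c * (t + 1) := by ring
    rw [h2, _root_.map_mul, _root_.map_mul]
    have h3 := quadraticChar_sq_one hc
    linear_combination (-(quadraticChar F t * quadraticChar F (t + 1))) * h3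
  have h4 : ∑ t : F, (quadraticChar F t : ℤ) * quadraticChar F (t + 1)
      = (quadraticChar F (-1) : ℤ) * jacobiSum (quadraticChar F) (quadraticChar F) := by
    rw [jacobiSum, Finset.mul_sum]
    refine Fintype.sum_equiv (Equiv.neg F) _ _ fun s => ?_
    show (quadraticChar F s : ℤ) * quadraticChar F (s + 1)
        = (quadraticChar F (-1) : ℤ) * ((quadraticChar F (-s) : ℤ) * quadraticChar F (1 - (-s)))
    have h5 : quadraticChar F (-s) = quadraticChar F (-1) * quadraticChar F s := by
      rw [← _root_.map_mul]; ring_nf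
    have h6 : (1 : F) - (-s) = s + 1 := by ring
    rw [h5, h6]
    have h8 := quadraticChar_sq_one (show (-1 : F) ≠ 0 by simp)
    linear_combination (-(quadraticChar F s * quadraticChar F (s + 1))) * h8
  have h7 : jacobiSum (quadraticChar F) (quadraticChar F) = -(quadraticChar F (-1)) := by
    have := jacobiSum_nontrivial_inv (quadraticChar_ne_one hF)
    rwa [(quadraticChar_isQuadratic F).inv] at this
  rw [h1, h4, h7]
  have h8 := quadraticChar_sq_one (show (-1 : F) ≠ 0 by simp)
  linear_combination (-1 : ℤ) * h8


lemma sum_chi_sub_right (hF : ringChar F ≠ 2) (a : F) :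
    ∑ b : F, (quadraticChar F (a - b) : ℤ) = 0 :=
  (Fintype.sum_equiv (Equiv.subLeft a) _ (fun x => (quadraticChar F x : ℤ))
    (fun b => rfl)).trans (quadraticChar_sum_zero hF)

lemma sum_chi_sub_left (hF : ringChar F ≠ 2) (b : F) :
    ∑ a : F, (quadraticChar F (a - b) : ℤ) = 0 :=
  (Fintype.sum_equiv (Equiv.subRight b) _ (fun x => (quadraticChar F x : ℤ))
    (fun a => rfl)).trans (quadraticChar_sum_zero hF)

lemma sum_sq0 : ∑ x : F, (quadraticChar F x : ℤ)^2 = (Fintype.card F : ℤ) - 1 := by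
  have h : ∀ x : F, (quadraticChar F x : ℤ)^2 = if x ≠ 0 then 1 else 0 := by
    intro x
    by_cases hx : x = 0
    · simp [hx]
    · rw [if_pos hx]; exact quadraticChar_sq_one hx
  rw [Finset.sum_congr rfl fun x _ => h x, Finset.sum_boole]
  rw [Finset.filter_ne', Finset.card_erase_of_mem (Finset.mem_univ _), Finset.card_univ]
  have : 1 ≤ Fintype.card F := Fintype.card_pos
  push_cast [Nat.cast_sub this]
  ring

lemma sq_right (a : F) : ∑ b : F, (quadraticChar F (a - b) : ℤ)^2 = (Fintype.card F : ℤ) - 1 :=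
  (Fintype.sum_equiv (Equiv.subLeft a) _ (fun x => (quadraticChar F x : ℤ)^2)
    (fun b => rfl)).trans (sum_sq0 F)

lemma sq_left (b : F) : ∑ a : F, (quadraticChar F (a - b) : ℤ)^2 = (Fintype.card F : ℤ) - 1 :=
  (Fintype.sum_equiv (Equiv.subRight b) _ (fun x => (quadraticChar F x : ℤ)^2)
    (fun a => rfl)).trans (sum_sq0 F)

lemma key_right (hF : ringChar F ≠ 2) {a a' : F} (h : a ≠ a') :
    ∑ b : F, (quadraticChar F (a - b) : ℤ) * quadraticChar F (a' - b) = -1 :=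
  (Fintype.sum_equiv (Equiv.subLeft a) _
    (fun x => (quadraticChar F x : ℤ) * quadraticChar F (x + (a' - a)))
    (fun b => by show _ = (quadraticChar F (a - b) : ℤ) * quadraticChar F (a - b + (a' - a)); rw [show a - b + (a' - a) = a' - b from by ring])).trans
  (sum_chi_mul F hF (sub_ne_zero.mpr h.symm))

lemma key_left (hF : ringChar F ≠ 2) {b b' : F} (h : b ≠ b') :
    ∑ a : F, (quadraticChar F (a - b) : ℤ) * quadraticChar F (a - b') = -1 :=
  (Fintype.sum_equiv (Equiv.subRight b) _
    (fun x => (quadraticChar F x : ℤ) * quadraticChar F (x + (b - b')))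
    (fun a => by show _ = (quadraticChar F (a - b) : ℤ) * quadraticChar F (a - b + (b - b')); rw [show a - b + (b - b') = a - b' from by ring])).trans
  (sum_chi_mul F hF (sub_ne_zero.mpr h))


lemma UUt (hF : ringChar F ≠ 2) :
    Umat F * (Umat F)ᵀ = (Fintype.card F : ℤ) • 1 := by
  ext i j
  rw [Matrix.mul_apply]
  simp only [Matrix.transpose_apply]
  rw [Fintype.sum_option]
  rcases i with _ | a <;> rcases j with _ | a'
  · simp [Umat, Smat, Matrix.one_apply]
  · have h0 := sum_chi_sub_right F hF a'
    simp only [quadraticChar_apply] at h0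
    simp [Umat, Smat, Matrix.one_apply, h0]
  · have h0 := sum_chi_sub_right F hF a
    simp only [quadraticChar_apply] at h0
    simp [Umat, Smat, Matrix.one_apply, h0]
  · by_cases h : a = a'
    · subst h
      simp only [Umat, Smat, Matrix.smul_apply, Matrix.one_apply_eq, smul_eq_mul, mul_one,
        neg_mul, neg_neg, one_mul]
      have : ∀ b : F, (quadraticChar F (a - b) : ℤ) * quadraticChar F (a - b)
          = (quadraticChar F (a - b) : ℤ)^2 := fun b => (sq _).symm
      rw [Finset.sum_congr rfl fun b _ => this b, sq_right F a]
      ring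
    · simp only [Umat, Smat, Matrix.smul_apply, smul_eq_mul, neg_mul, neg_neg, one_mul,
        Matrix.one_apply_ne (fun hc => h (Option.some.inj hc)), mul_zero]
      rw [key_right F hF h]
      ring

lemma UtU (hF : ringChar F ≠ 2) :
    (Umat F)ᵀ * Umat F = (Fintype.card F : ℤ) • 1 := by
  ext i j
  rw [Matrix.mul_apply]
  simp only [Matrix.transpose_apply]
  rw [Fintype.sum_option]
  rcases i with _ | b <;> rcases j with _ | b'
  · simp [Umat, Smat, Matrix.one_apply]
  · have h0 := sum_chi_sub_left F hF b'
    simp only [quadraticChar_apply] at h0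
    simp [Umat, Smat, Matrix.one_apply, h0, Finset.sum_neg_distrib]
  · have h0 := sum_chi_sub_left F hF b
    simp only [quadraticChar_apply] at h0
    simp [Umat, Smat, Matrix.one_apply, h0, Finset.sum_neg_distrib]
  · by_cases h : b = b'
    · subst h
      simp only [Umat, Smat, Matrix.smul_apply, Matrix.one_apply_eq, smul_eq_mul, mul_one,
        one_mul]
      have : ∀ a : F, (quadraticChar F (a - b) : ℤ) * quadraticChar F (a - b)
          = (quadraticChar F (a - b) : ℤ)^2 := fun a => (sq _).symm
      rw [Finset.sum_congr rfl fun a _ => this a, sq_left F b]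
      ring
    · simp only [Umat, Smat, Matrix.smul_apply, smul_eq_mul, one_mul,
        Matrix.one_apply_ne (fun hc => h (Option.some.inj hc)), mul_zero]
      rw [key_left F hF h]
      ring


lemma Udiag (i : Option F) : Umat F i i = 0 := by
  rcases i with _ | a <;> simp [Umat, Smat]

lemma Uoff {i j : Option F} (h : i ≠ j) : Umat F i j = 1 ∨ Umat F i j = -1 := by
  rcases i with _ | a <;> rcases j with _ | b
  · exact absurd rfl h
  · left; rfl
  · right; rfl
  · have hab : a - b ≠ 0 := sub_ne_zero.mpr fun hc => h (by rw [hc])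
    have := quadraticChar_dichotomy hab
    rcases this with h1 | h1
    · left; show (quadraticChar F (a - b) : ℤ) = 1; rw [h1]
    · right; show (quadraticChar F (a - b) : ℤ) = -1; rw [h1]

end AuxLemmas

/-- For an odd prime power `q ≡ 2 (mod 3)`, the block matrix
`H = [[I − U_qᵀ, U_q + I], [I + U_qᵀ, U_q − I]]` is a Hadamard matrix of order `2q+2`,
its row indexed by `∞` in the first block row is the all-one vector, and each of its
rows, reduced modulo 3, is a codeword of `L(q)`. -/
theorem stmt_4 (q : ℕ) (hq : Odd q) (h3 : q % 3 = 2)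
    (F : Type) [Field F] [Fintype F] [DecidableEq F] (hF : Fintype.card F = q) :
    (∀ i j, Hmat F i j = 1 ∨ Hmat F i j = -1) ∧
    Hmat F * (Hmat F)ᵀ =
      ((2 * q + 2 : ℕ) : ℤ) • (1 : Matrix (Option F ⊕ Option F) (Option F ⊕ Option F) ℤ) ∧
    (∀ j, Hmat F (Sum.inl none) j = 1) ∧
    (∀ i, (fun j => ((Hmat F i j : ℤ) : ZMod 3)) ∈ Lcode F) := by
  have hF2 : ringChar F ≠ 2 := by
    intro h
    have := FiniteField.even_card_of_char_two h
    rw [hF] at this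
    have hq2 := Nat.odd_iff.mp hq
    omega
  have hUUt := UUt F hF2
  have hUtU := UtU F hF2
  refine ⟨?_, ?_, ?_, ?_⟩
  · -- entries ±1
    rintro (i | i) (j | j)
    · rw [show Hmat F (Sum.inl i) (Sum.inl j)
          = (1 : Matrix (Option F) (Option F) ℤ) i j - Umat F j i from rfl]
      by_cases h : i = j
      · subst h; rw [Matrix.one_apply_eq, Udiag]; left; ring
      · rw [Matrix.one_apply_ne h, zero_sub]
        rcases Uoff F (fun hc : j = i => h hc.symm) with h1 | h1 <;> rw [h1]
        · right; ring
        · left; ring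
    · rw [show Hmat F (Sum.inl i) (Sum.inr j)
          = Umat F i j + (1 : Matrix (Option F) (Option F) ℤ) i j from rfl]
      by_cases h : i = j
      · subst h; rw [Matrix.one_apply_eq, Udiag]; left; ring
      · rw [Matrix.one_apply_ne h, add_zero]; exact Uoff F h
    · rw [show Hmat F (Sum.inr i) (Sum.inl j)
          = (1 : Matrix (Option F) (Option F) ℤ) i j + Umat F j i from rfl]
      by_cases h : i = j
      · subst h; rw [Matrix.one_apply_eq, Udiag]; left; ring
      · rw [Matrix.one_apply_ne h, zero_add]
        exact Uoff F (fun hc : j = i => h hc.symm)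
    · rw [show Hmat F (Sum.inr i) (Sum.inr j)
          = Umat F i j - (1 : Matrix (Option F) (Option F) ℤ) i j from rfl]
      by_cases h : i = j
      · subst h; rw [Matrix.one_apply_eq, Udiag]; right; ring
      · rw [Matrix.one_apply_ne h, sub_zero]; exact Uoff F h
  · -- Hadamard property
    have hc : ((2 * q + 2 : ℕ) : ℤ) = (Fintype.card F : ℤ) + (Fintype.card F : ℤ) + 2 := by
      push_cast [hF]; ring
    rw [Hmat, Matrix.fromBlocks_transpose, Matrix.fromBlocks_multiply,
      ← Matrix.fromBlocks_one (l := Option F) (m := Option F), Matrix.fromBlocks_smul,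
      smul_zero]
    rw [Matrix.fromBlocks_inj]
    refine ⟨?_, ?_, ?_, ?_⟩
    · calc (1 - (Umat F)ᵀ) * (1 - (Umat F)ᵀ)ᵀ + (Umat F + 1) * (Umat F + 1)ᵀ
          = (Umat F)ᵀ * Umat F + Umat F * (Umat F)ᵀ + (1 + 1) := by
            simp only [Matrix.transpose_sub, Matrix.transpose_add, Matrix.transpose_one,
              Matrix.transpose_transpose]
            noncomm_ring
        _ = ((2 * q + 2 : ℕ) : ℤ) • 1 := by
            rw [hUtU, hUUt, hc, add_smul, add_smul, two_smul]
    · calc (1 - (Umat F)ᵀ) * (1 + (Umat F)ᵀ)ᵀ + (Umat F + 1) * (Umat F - 1)ᵀ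
          = Umat F * (Umat F)ᵀ - (Umat F)ᵀ * Umat F := by
            simp only [Matrix.transpose_sub, Matrix.transpose_add, Matrix.transpose_one,
              Matrix.transpose_transpose]
            noncomm_ring
        _ = 0 := by rw [hUUt, hUtU, sub_self]
    · calc (1 + (Umat F)ᵀ) * (1 - (Umat F)ᵀ)ᵀ + (Umat F - 1) * (Umat F + 1)ᵀ
          = Umat F * (Umat F)ᵀ - (Umat F)ᵀ * Umat F := by
            simp only [Matrix.transpose_sub, Matrix.transpose_add, Matrix.transpose_one,
              Matrix.transpose_transpose]
            noncomm_ring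
        _ = 0 := by rw [hUUt, hUtU, sub_self]
    · calc (1 + (Umat F)ᵀ) * (1 + (Umat F)ᵀ)ᵀ + (Umat F - 1) * (Umat F - 1)ᵀ
          = (Umat F)ᵀ * Umat F + Umat F * (Umat F)ᵀ + (1 + 1) := by
            simp only [Matrix.transpose_sub, Matrix.transpose_add, Matrix.transpose_one,
              Matrix.transpose_transpose]
            noncomm_ring
        _ = ((2 * q + 2 : ℕ) : ℤ) • 1 := by
            rw [hUtU, hUUt, hc, add_smul, add_smul, two_smul]
  · -- all-one row
    rintro (j | j)
    · rw [show Hmat F (Sum.inl none) (Sum.inl j)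
          = (1 : Matrix (Option F) (Option F) ℤ) none j - Umat F j none from rfl]
      rcases j with _ | b
      · simp [Matrix.one_apply, Umat, Smat]
      · simp [Matrix.one_apply, Umat, Smat]
    · rw [show Hmat F (Sum.inl none) (Sum.inr j)
          = Umat F none j + (1 : Matrix (Option F) (Option F) ℤ) none j from rfl]
      rcases j with _ | b
      · simp [Matrix.one_apply, Umat, Smat]
      · simp [Matrix.one_apply, Umat, Smat]
  · -- rows are codewords
    have hq3 : ((Fintype.card F : ℕ) : ZMod 3) + 1 = 0 := by
      rw [hF, ← ZMod.natCast_mod q 3, h3]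
      decide
    have hZ1 : (1 - (Umat F)ᵀ) * Umat F
        = (Umat F + 1) - (((Fintype.card F : ℤ) + 1) • 1) := by
      rw [sub_mul, one_mul, hUtU, add_smul, one_smul]; abel
    have hZ2 : (1 + (Umat F)ᵀ) * Umat F
        = (Umat F - 1) + (((Fintype.card F : ℤ) + 1) • 1) := by
      rw [add_mul, one_mul, hUtU, add_smul, one_smul]; abel
    intro i
    have hcomb : (fun j => ((Hmat F i j : ℤ) : ZMod 3))
        = ∑ k : Option F, ((Hmat F i (Sum.inl k) : ℤ) : ZMod 3) • genRowL F k := by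
      funext j
      rw [Finset.sum_apply]
      rcases j with j | j
      · simp only [Pi.smul_apply, genRowL, smul_eq_mul, mul_ite, mul_one, mul_zero]
        rw [Finset.sum_ite_eq' Finset.univ j (fun k => ((Hmat F i (Sum.inl k) : ℤ) : ZMod 3))]
        simp
      · simp only [Pi.smul_apply, genRowL, smul_eq_mul]
        have hsum : ∑ k : Option F, ((Hmat F i (Sum.inl k) : ℤ) : ZMod 3)
              * ((Umat F k j : ℤ) : ZMod 3)
            = ((∑ k : Option F, Hmat F i (Sum.inl k) * Umat F k j : ℤ) : ZMod 3) := by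
          push_cast
          rfl
        rw [hsum]
        rcases i with i | i
        · have e : ∑ k : Option F, Hmat F (Sum.inl i) (Sum.inl k) * Umat F k j
              = ((1 - (Umat F)ᵀ) * Umat F) i j := by
            rw [Matrix.mul_apply]
            rfl
          rw [e, hZ1]
          have h2 : ((((Umat F + 1) - ((Fintype.card F : ℤ) + 1) • 1) i j : ℤ) : ZMod 3)
              = (((Umat F + 1) i j : ℤ) : ZMod 3) := by
            simp only [Matrix.sub_apply, Matrix.smul_apply, smul_eq_mul]
            push_cast
            rw [hq3, zero_mul, sub_zero]
          rw [h2]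
          rfl
        · have e : ∑ k : Option F, Hmat F (Sum.inr i) (Sum.inl k) * Umat F k j
              = ((1 + (Umat F)ᵀ) * Umat F) i j := by
            rw [Matrix.mul_apply]
            rfl
          rw [e, hZ2]
          have h2 : ((((Umat F - 1) + ((Fintype.card F : ℤ) + 1) • 1) i j : ℤ) : ZMod 3)
              = (((Umat F - 1) i j : ℤ) : ZMod 3) := by
            simp only [Matrix.add_apply, Matrix.smul_apply, smul_eq_mul]
            push_cast
            rw [hq3, zero_mul, add_zero]
          rw [h2]
          rfl
    rw [hcomb]
    exact Submodule.sum_mem _ fun k _ =>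
      Submodule.smul_mem _ _ (Submodule.subset_span ⟨k, rfl⟩)
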